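/- There exists a constant C > 0 such that for every continuously differentiable function f : ℝ³ → ℝ with compact support, ‖f‖_{L³(ℝ³)} ≤ C · ‖f‖_{L²(ℝ³)}^{1/2} · ‖∇f‖_{L²(ℝ³)}^{1/2}, where ∇f denotes the (Fréchet) derivative of f and ‖∇f‖_{L²(ℝ³)} is the L² norm (with respect to Lebesgue measure on ℝ³) of the pointwise operator norm of ∇f. -/

import Mathlib

open MeasureTheory
open ENNReal NNReal

lemma aux1 : (1:ℝ≥0∞)/3 = 1/4 + 1/12 := by
  have h4 : (1:ℝ≥0∞)/4 ≠ ⊤ := by simp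
  have h12 : (1:ℝ≥0∞)/12 ≠ ⊤ := by simp
  have : ((1:ℝ≥0∞)/3).toReal = ((1:ℝ≥0∞)/4 + 1/12).toReal := by
    rw [ENNReal.toReal_add h4 h12]
    simp [ENNReal.toReal_div]; norm_num
  exact (ENNReal.toReal_eq_toReal_iff' (by simp) (ENNReal.add_ne_top.mpr ⟨h4, h12⟩)).mp this

lemma aux2 : (4:ℝ≥0∞) * ENNReal.ofReal (1/2) = 2 := by
  rw [show ((1:ℝ)/2) = (2:ℝ)⁻¹ by norm_num, ENNReal.ofReal_inv_of_pos (by norm_num)]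
  rw [show ENNReal.ofReal 2 = 2 by norm_num [ENNReal.ofReal_ofNat]]
  rw [show (4:ℝ≥0∞) = 2*2 by norm_num, mul_assoc, ENNReal.mul_inv_cancel] <;> norm_num

lemma aux3 : (12:ℝ≥0∞) * ENNReal.ofReal (1/2) = 6 := by
  rw [show ((1:ℝ)/2) = (2:ℝ)⁻¹ by norm_num, ENNReal.ofReal_inv_of_pos (by norm_num)]
  rw [show ENNReal.ofReal 2 = 2 by norm_num [ENNReal.ofReal_ofNat]]
  rw [show (12:ℝ≥0∞) = 6*2 by norm_num, mul_assoc, ENNReal.mul_inv_cancel] <;> norm_num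

lemma interp {f : EuclideanSpace ℝ (Fin 3) → ℝ} (hf : Continuous f) :
    eLpNorm f 3 volume ≤
      eLpNorm f 2 volume ^ ((1:ℝ)/2) * eLpNorm f 6 volume ^ ((1:ℝ)/2) := by
  set u : EuclideanSpace ℝ (Fin 3) → ℝ := fun x => ‖f x‖ ^ ((1:ℝ)/2) with hu_def
  have hu : AEStronglyMeasurable u volume :=
    (hf.norm.rpow_const fun x => Or.inr (by norm_num)).aestronglyMeasurable
  have key : eLpNorm f 3 volume = eLpNorm (fun x => u x * u x) 3 volume := by
    rw [← eLpNorm_norm f]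
    congr 1; ext x
    rw [hu_def, ← Real.rpow_add' (norm_nonneg _) (by norm_num)]
    norm_num
  have holder := eLpNorm_le_eLpNorm_mul_eLpNorm_of_nnnorm (μ := volume)
    (p := 4) (q := 12) (r := 3) hu hu (fun a b => a * b) 1
    (Filter.Eventually.of_forall fun x => by simpa only [ENNReal.coe_one, one_mul] using (nnnorm_mul _ _).le)
    (hpqr := ⟨by simpa only [one_div] using aux1.symm⟩)
  have h4 : eLpNorm u 4 volume = eLpNorm f 2 volume ^ ((1:ℝ)/2) := by
    rw [hu_def, eLpNorm_norm_rpow f (by norm_num : (0:ℝ) < 1/2), aux2]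
  have h12 : eLpNorm u 12 volume = eLpNorm f 6 volume ^ ((1:ℝ)/2) := by
    rw [hu_def, eLpNorm_norm_rpow f (by norm_num : (0:ℝ) < 1/2), aux3]
  rw [key]
  calc eLpNorm (fun x => u x * u x) 3 volume ≤ eLpNorm u 4 volume * eLpNorm u 12 volume := by simpa only [ENNReal.coe_one, one_mul] using holder
    _ = _ := by rw [h4, h12]


/-- Gagliardo–Nirenberg (Ladyzhenskaya-type) interpolation inequality in ℝ³:
`‖f‖_{L³} ≤ C ‖f‖_{L²}^{1/2} ‖∇f‖_{L²}^{1/2}` for smooth compactly supported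
functions. -/
theorem L3_interpolation_R3 :
    ∃ C : ℝ, 0 < C ∧
      ∀ f : EuclideanSpace ℝ (Fin 3) → ℝ, ContDiff ℝ 1 f → HasCompactSupport f →
        (eLpNorm f 3 volume).toReal ≤
          C * (eLpNorm f 2 volume).toReal ^ ((1 : ℝ) / 2) *
            (eLpNorm (fun x => ‖fderiv ℝ f x‖) 2 volume).toReal ^ ((1 : ℝ) / 2) := by
  set c : ℝ≥0 := SNormLESNormFDerivOfEqConst (E := EuclideanSpace ℝ (Fin 3)) ℝ volume 2 with hc
  refine ⟨(c:ℝ) ^ ((1:ℝ)/2) + 1, by positivity, fun f hf h2f => ?_⟩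
  have hfc : Continuous f := hf.continuous
  have hdf : Continuous fun x => fderiv ℝ f x := (hf.fderiv_right (m := 0) (by norm_num)).continuous
  have h2df : HasCompactSupport fun x => fderiv ℝ f x := h2f.fderiv ℝ
  -- Sobolev
  have sob : eLpNorm f 6 volume ≤ c * eLpNorm (fderiv ℝ f) 2 volume := by
    have := eLpNorm_le_eLpNorm_fderiv_of_eq (F := ℝ) (μ := volume) hf h2f
      (p := 2) (p' := 6) (by norm_num) (by simp) ?_
    · exact_mod_cast this
    · simp; norm_num
  have hint := interp hfc
  -- finiteness
  have hf2 : eLpNorm f 2 volume ≠ ⊤ :=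
    (hfc.memLp_of_hasCompactSupport h2f).eLpNorm_ne_top
  have hdf2 : eLpNorm (fderiv ℝ f) 2 volume ≠ ⊤ :=
    (hdf.memLp_of_hasCompactSupport h2df).eLpNorm_ne_top
  have chain : eLpNorm f 3 volume ≤
      (c : ℝ≥0∞) ^ ((1:ℝ)/2) * eLpNorm f 2 volume ^ ((1:ℝ)/2) *
        eLpNorm (fderiv ℝ f) 2 volume ^ ((1:ℝ)/2) := by
    refine hint.trans ?_
    calc eLpNorm f 2 volume ^ ((1:ℝ)/2) * eLpNorm f 6 volume ^ ((1:ℝ)/2)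
        ≤ eLpNorm f 2 volume ^ ((1:ℝ)/2) *
            ((c : ℝ≥0∞) * eLpNorm (fderiv ℝ f) 2 volume) ^ ((1:ℝ)/2) := by
          gcongr
      _ = _ := by
          rw [ENNReal.mul_rpow_of_nonneg _ _ (by norm_num)]
          ring
  have hRHSne : (c : ℝ≥0∞) ^ ((1:ℝ)/2) * eLpNorm f 2 volume ^ ((1:ℝ)/2) *
      eLpNorm (fderiv ℝ f) 2 volume ^ ((1:ℝ)/2) ≠ ⊤ := by
    apply ENNReal.mul_ne_top
    apply ENNReal.mul_ne_top
    · exact ENNReal.rpow_ne_top_of_nonneg (by norm_num) ENNReal.coe_ne_top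
    · exact ENNReal.rpow_ne_top_of_nonneg (by norm_num) hf2
    · exact ENNReal.rpow_ne_top_of_nonneg (by norm_num) hdf2
  have := ENNReal.toReal_mono hRHSne chain
  rw [eLpNorm_norm]
  refine this.trans ?_
  rw [ENNReal.toReal_mul, ENNReal.toReal_mul, ← ENNReal.toReal_rpow, ← ENNReal.toReal_rpow,
    ← ENNReal.toReal_rpow]
  simp only [ENNReal.coe_toReal]
  have h2 : (0:ℝ) ≤ (eLpNorm f 2 volume).toReal ^ ((1:ℝ)/2) := by positivity
  have h3 : (0:ℝ) ≤ (eLpNorm (fderiv ℝ f) 2 volume).toReal ^ ((1:ℝ)/2) := by positivity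
  nlinarith [mul_nonneg h2 h3]
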